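/- Let c₀ ∈ [0,1). Define c : (0,∞) → ℝ by c(r) = cosh⁻¹(c₀ r + 1) / cosh⁻¹(r + 1). Then sup over r ∈ (0, R] of c(r) is strictly less than 1 for every R > 0; in particular for all r > 0, cosh⁻¹(c₀ r + 1) < cosh⁻¹(r + 1), and lim_{r→0⁺} c(r) = √c₀ < 1. -/

import Mathlib

open Real Filter

/-- Inverse hyperbolic cosine: `cosh⁻¹(x) = log (x + √(x² - 1))` for `x ≥ 1`. -/
noncomputable def arcosh (x : ℝ) : ℝ := Real.log (x + Real.sqrt (x^2 - 1))

lemma arcosh_aux {x : ℝ} (hx : 1 ≤ x) : 1 ≤ x + Real.sqrt (x^2 - 1) :=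
  le_add_of_le_of_nonneg hx (Real.sqrt_nonneg _)

lemma arcosh_nonneg {x : ℝ} (hx : 1 ≤ x) : 0 ≤ _root_.arcosh x :=
  Real.log_nonneg (arcosh_aux hx)

lemma arcosh_lt {a b : ℝ} (ha : 1 ≤ a) (hab : a < b) : _root_.arcosh a < _root_.arcosh b := by
  apply Real.log_lt_log (lt_of_lt_of_le one_pos (arcosh_aux ha))
  have h1 : Real.sqrt (a^2-1) ≤ Real.sqrt (b^2-1) := by
    apply Real.sqrt_le_sqrt; nlinarith
  linarith

lemma arcosh_le {a b : ℝ} (ha : 1 ≤ a) (hab : a ≤ b) : _root_.arcosh a ≤ _root_.arcosh b := by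
  rcases eq_or_lt_of_le hab with rfl | h
  · exact le_refl _
  · exact (arcosh_lt ha h).le

lemma arcosh_one : _root_.arcosh 1 = 0 := by norm_num [_root_.arcosh]

lemma arcosh_pos {x : ℝ} (hx : 1 < x) : 0 < _root_.arcosh x := by
  have := arcosh_lt (le_refl 1) hx; rwa [arcosh_one] at this

lemma arcosh_cosh {t : ℝ} (ht : 0 ≤ t) : _root_.arcosh (Real.cosh t) = t := by
  unfold _root_.arcosh
  have h1 : Real.cosh t ^ 2 - 1 = Real.sinh t ^ 2 := by
    have := Real.cosh_sq t; linarith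
  rw [h1, Real.sqrt_sq (Real.sinh_nonneg_iff.2 ht), Real.cosh_add_sinh, Real.log_exp]

lemma cosh_aux (t : ℝ) : Real.cosh t = 2 * Real.sinh (t/2)^2 + 1 := by
  have h2 := Real.cosh_two_mul (t/2)
  have h3 := Real.cosh_sq (t/2)
  rw [show 2*(t/2) = t by ring] at h2
  nlinarith

lemma cosh_ge (t : ℝ) : 1 + t^2/2 ≤ Real.cosh t := by
  have h1 := cosh_aux t
  rcases le_total 0 t with ht | ht
  · have := (Real.self_le_sinh_iff).2 (by linarith : (0:ℝ) ≤ t/2)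
    nlinarith
  · have hs := Real.sinh_le_self_iff.2 (by linarith : t/2 ≤ 0)
    nlinarith

lemma cosh_le (t : ℝ) (ht : 0 ≤ t) : Real.cosh t ≤ 1 + t^2/2 * Real.exp t := by
  have h1 := cosh_aux t
  have hv : 0 ≤ t/2 := by linarith
  have hE1 : 1 ≤ Real.exp (t/2) := Real.one_le_exp hv
  have hsinh : Real.sinh (t/2) ≤ (t/2) * Real.exp (t/2) := by
    have h4 := Real.add_one_le_exp (-(t/2))
    have key : (1 - t/2) * Real.exp (t/2) ≤ 1 := by
      have h := mul_le_mul_of_nonneg_right h4 (Real.exp_pos (t/2)).le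
      rw [← Real.exp_add] at h
      simp only [neg_add_cancel, Real.exp_zero] at h
      linarith
    rw [Real.sinh_eq]
    nlinarith [mul_nonneg hv (sub_nonneg.2 hE1), Real.exp_pos (-(t/2)),
      Real.add_one_le_exp (-(t/2))]
  have hs0 : 0 ≤ Real.sinh (t/2) := Real.sinh_nonneg_iff.2 hv
  have hee : Real.exp (t/2) * Real.exp (t/2) = Real.exp t := by
    rw [← Real.exp_add]; ring_nf
  nlinarith [Real.exp_pos (t/2)]

lemma arcosh_le_sqrt {x : ℝ} (hx : 0 ≤ x) : _root_.arcosh (1+x) ≤ Real.sqrt (2*x) := by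
  have h1 : 1 + x ≤ Real.cosh (Real.sqrt (2*x)) := by
    have := cosh_ge (Real.sqrt (2*x))
    rw [Real.sq_sqrt (by linarith : (0:ℝ) ≤ 2*x)] at this
    linarith
  calc _root_.arcosh (1+x) ≤ _root_.arcosh (Real.cosh (Real.sqrt (2*x))) := arcosh_le (by linarith) h1
    _ = Real.sqrt (2*x) := _root_.arcosh_cosh (Real.sqrt_nonneg _)

lemma sqrt_le_arcosh {x : ℝ} (hx : 0 ≤ x) :
    Real.sqrt (2*x) * Real.exp (-(Real.sqrt (2*x)/2)) ≤ _root_.arcosh (1+x) := by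
  set t := Real.sqrt (2*x) with htdef
  have ht0 : 0 ≤ t := Real.sqrt_nonneg _
  set s := t * Real.exp (-(t/2)) with hsdef
  have hs0 : 0 ≤ s := mul_nonneg ht0 (Real.exp_pos _).le
  have hst : s ≤ t := by
    have : Real.exp (-(t/2)) ≤ 1 := Real.exp_le_one_iff.2 (by linarith)
    nlinarith
  have hcosh : Real.cosh s ≤ 1 + x := by
    have h1 := cosh_le s hs0
    have he : Real.exp (-(t/2)) * Real.exp (-(t/2)) = Real.exp (-t) := by
      rw [← Real.exp_add]; ring_nf
    have ht2 : t^2 = 2*x := Real.sq_sqrt (by linarith)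
    have hs2 : s^2 = 2*x * Real.exp (-t) := by
      rw [hsdef]; linear_combination (Real.exp (-(t/2)))^2 * ht2 + 2*x*he
    have h2 : s^2/2 * Real.exp s = x * Real.exp (s - t) := by
      rw [hs2, Real.exp_sub, Real.exp_neg]
      field_simp
    have h3 : Real.exp (s - t) ≤ 1 := Real.exp_le_one_iff.2 (by linarith)
    have h4 : x * Real.exp (s-t) ≤ x := by nlinarith [Real.exp_pos (s-t)]
    linarith
  calc s = _root_.arcosh (Real.cosh s) := (_root_.arcosh_cosh hs0).symm
    _ ≤ _root_.arcosh (1+x) := arcosh_le (Real.one_le_cosh s) hcosh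

set_option maxHeartbeats 1000000 in
/-- For `c₀ ∈ [0,1)` and `c(r) = cosh⁻¹(c₀ r + 1)/cosh⁻¹(r + 1)`:
(i) `cosh⁻¹(c₀ r + 1) < cosh⁻¹(r + 1)` for all `r > 0`;
(ii) `c(r) → √c₀ < 1` as `r → 0⁺`;
(iii) for each `R > 0` there is `c₁ < 1` with
`cosh⁻¹(c₀ r + 1) ≤ c₁ cosh⁻¹(r + 1)` for all `r ∈ (0, R]`. -/
theorem arcosh_ratio_lt_one (c₀ : ℝ) (hc₀ : 0 ≤ c₀) (hc₀1 : c₀ < 1) :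
    (∀ r : ℝ, 0 < r → _root_.arcosh (c₀ * r + 1) < _root_.arcosh (r + 1)) ∧
    (Tendsto (fun r : ℝ => _root_.arcosh (c₀ * r + 1) / _root_.arcosh (r + 1))
      (nhdsWithin 0 (Set.Ioi 0)) (nhds (Real.sqrt c₀)) ∧ Real.sqrt c₀ < 1) ∧
    (∀ R : ℝ, 0 < R → ∃ c₁ : ℝ, c₁ < 1 ∧
      ∀ r ∈ Set.Ioc (0 : ℝ) R, _root_.arcosh (c₀ * r + 1) ≤ c₁ * _root_.arcosh (r + 1)) := by
  have hden : ∀ r : ℝ, 0 < r → 0 < _root_.arcosh (r+1) := fun r hr => _root_.arcosh_pos (by linarith)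
  have hnum1 : ∀ r : ℝ, 0 < r → 1 ≤ c₀*r+1 := fun r hr => by nlinarith
  have part1 : ∀ r : ℝ, 0 < r → _root_.arcosh (c₀*r+1) < _root_.arcosh (r+1) := by
    intro r hr; exact arcosh_lt (hnum1 r hr) (by nlinarith)
  have hfac : ∀ r : ℝ, 0 ≤ r → Real.sqrt (2*(c₀*r)) = Real.sqrt c₀ * Real.sqrt (2*r) := by
    intro r hr
    rw [show 2*(c₀*r) = c₀*(2*r) by ring, Real.sqrt_mul hc₀]
  have K1 : ∀ r : ℝ, 0 < r → _root_.arcosh (c₀*r+1) ≤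
      (Real.sqrt c₀ * Real.exp (Real.sqrt (2*r)/2)) * _root_.arcosh (r+1) := by
    intro r hr
    have h1 : _root_.arcosh (c₀*r+1) ≤ Real.sqrt (2*(c₀*r)) := by
      have := arcosh_le_sqrt (mul_nonneg hc₀ hr.le)
      rwa [show (1:ℝ)+c₀*r = c₀*r+1 by ring] at this
    have h2 := sqrt_le_arcosh hr.le
    rw [show (1:ℝ)+r = r+1 by ring] at h2
    have hprod : Real.exp (Real.sqrt (2*r)/2) * Real.exp (-(Real.sqrt (2*r)/2)) = 1 := by
      rw [← Real.exp_add]; simp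
    have h3 := mul_le_mul_of_nonneg_left h2 (Real.exp_pos (Real.sqrt (2*r)/2)).le
    calc _root_.arcosh (c₀*r+1) ≤ Real.sqrt c₀ * Real.sqrt (2*r) := by rw [← hfac r hr.le]; exact h1
      _ ≤ Real.sqrt c₀ * (Real.exp (Real.sqrt (2*r)/2) * _root_.arcosh (r+1)) := by
          apply mul_le_mul_of_nonneg_left _ (Real.sqrt_nonneg _)
          rw [show Real.exp (Real.sqrt (2*r)/2) * (Real.sqrt (2*r) * Real.exp (-(Real.sqrt (2*r)/2)))
            = Real.sqrt (2*r) * (Real.exp (Real.sqrt (2*r)/2) * Real.exp (-(Real.sqrt (2*r)/2))) by ring,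
            hprod, mul_one] at h3
          exact h3
      _ = _ := by ring
  have K2 : ∀ r : ℝ, 0 < r →
      (Real.sqrt c₀ * Real.exp (-(Real.sqrt (2*(c₀*r))/2))) * _root_.arcosh (r+1) ≤ _root_.arcosh (c₀*r+1) := by
    intro r hr
    have h1 := sqrt_le_arcosh (mul_nonneg hc₀ hr.le)
    rw [show (1:ℝ)+c₀*r = c₀*r+1 by ring] at h1
    have h2 : _root_.arcosh (r+1) ≤ Real.sqrt (2*r) := by
      have := arcosh_le_sqrt hr.le; rwa [show (1:ℝ)+r = r+1 by ring] at this
    have hco : (0:ℝ) ≤ Real.sqrt c₀ * Real.exp (-(Real.sqrt (2*(c₀*r))/2)) :=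
      mul_nonneg (Real.sqrt_nonneg _) (Real.exp_pos _).le
    calc (Real.sqrt c₀ * Real.exp (-(Real.sqrt (2*(c₀*r))/2))) * _root_.arcosh (r+1)
        ≤ (Real.sqrt c₀ * Real.exp (-(Real.sqrt (2*(c₀*r))/2))) * Real.sqrt (2*r) :=
          mul_le_mul_of_nonneg_left h2 hco
      _ = Real.sqrt (2*(c₀*r)) * Real.exp (-(Real.sqrt (2*(c₀*r))/2)) := by
          rw [hfac r hr.le]; ring
      _ ≤ _root_.arcosh (c₀*r+1) := h1
  have hsqlt1 : Real.sqrt c₀ < 1 := by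
    have := Real.sqrt_lt_sqrt hc₀ hc₀1
    rwa [Real.sqrt_one] at this
  -- part (ii)
  have part2 : Tendsto (fun r : ℝ => _root_.arcosh (c₀ * r + 1) / _root_.arcosh (r + 1))
      (nhdsWithin 0 (Set.Ioi 0)) (nhds (Real.sqrt c₀)) := by
    have hUcont : Continuous (fun r : ℝ => Real.sqrt c₀ * Real.exp (Real.sqrt (2*r)/2)) := by
      continuity
    have hLcont : Continuous (fun r : ℝ => Real.sqrt c₀ * Real.exp (-(Real.sqrt (2*(c₀*r))/2))) := by
      continuity
    have hU : Tendsto (fun r : ℝ => Real.sqrt c₀ * Real.exp (Real.sqrt (2*r)/2))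
        (nhdsWithin 0 (Set.Ioi 0)) (nhds (Real.sqrt c₀)) := by
      have := (hUcont.tendsto 0).mono_left (nhdsWithin_le_nhds (s := Set.Ioi 0))
      simpa using this
    have hL : Tendsto (fun r : ℝ => Real.sqrt c₀ * Real.exp (-(Real.sqrt (2*(c₀*r))/2)))
        (nhdsWithin 0 (Set.Ioi 0)) (nhds (Real.sqrt c₀)) := by
      have := (hLcont.tendsto 0).mono_left (nhdsWithin_le_nhds (s := Set.Ioi 0))
      simpa using this
    apply tendsto_of_tendsto_of_tendsto_of_le_of_le' hL hU
    · refine eventually_nhdsWithin_of_forall (fun r hr => ?_)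
      have hr' : (0:ℝ) < r := hr
      exact (le_div_iff₀ (hden r hr')).2 (K2 r hr')
    · refine eventually_nhdsWithin_of_forall (fun r hr => ?_)
      have hr' : (0:ℝ) < r := hr
      exact (div_le_iff₀ (hden r hr')).2 (K1 r hr')
  refine ⟨part1, ⟨part2, hsqlt1⟩, ?_⟩
  -- part (iii)
  intro R hR
  rcases eq_or_lt_of_le hc₀ with rfl | hc0
  · refine ⟨1/2, by norm_num, fun r hr => ?_⟩
    rw [show (0:ℝ)*r+1 = 1 by ring, arcosh_one]
    have := _root_.arcosh_nonneg (show (1:ℝ) ≤ r+1 by linarith [hr.1])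
    linarith
  · have hsc : 0 < Real.sqrt c₀ := Real.sqrt_pos.2 hc0
    set L := -Real.log (Real.sqrt c₀) with hLdef
    have hLpos : 0 < L := by
      have := Real.log_neg hsc hsqlt1; linarith
    have hexpL : Real.sqrt c₀ * Real.exp L = 1 := by
      rw [hLdef, Real.exp_neg, Real.exp_log hsc]
      field_simp
    set ε := min R (L^2) with hεdef
    have hε0 : 0 < ε := lt_min hR (by positivity)
    have hεR : ε ≤ R := min_le_left _ _
    have hεL : Real.sqrt (2*ε)/2 < L := by
      have h1 : Real.sqrt (2*ε) < 2*L := by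
        rw [Real.sqrt_lt' (by linarith)]
        have h2 : ε ≤ L^2 := min_le_right _ _
        nlinarith
      linarith
    have hc₁s1 : Real.sqrt c₀ * Real.exp (Real.sqrt (2*ε)/2) < 1 := by
      have h1 : Real.exp (Real.sqrt (2*ε)/2) < Real.exp L := Real.exp_lt_exp.2 hεL
      nlinarith [Real.exp_pos (Real.sqrt (2*ε)/2)]
    have hIcc : (Set.Icc ε R).Nonempty := ⟨ε, le_refl _, hεR⟩
    have cnum : Continuous (fun r:ℝ => (c₀*r+1) + Real.sqrt ((c₀*r+1)^2 - 1)) := by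
      apply Continuous.add (by fun_prop)
      exact Real.continuous_sqrt.comp (by fun_prop)
    have cden : Continuous (fun r:ℝ => (r+1) + Real.sqrt ((r+1)^2 - 1)) := by
      apply Continuous.add (by fun_prop)
      exact Real.continuous_sqrt.comp (by fun_prop)
    have hfc : ContinuousOn (fun r => _root_.arcosh (c₀*r+1) / _root_.arcosh (r+1)) (Set.Icc ε R) := by
      simp only [_root_.arcosh]
      apply ContinuousOn.div
      · apply ContinuousOn.log cnum.continuousOn
        intro r hr
        have h1 : (1:ℝ) ≤ c₀*r+1 := hnum1 r (lt_of_lt_of_le hε0 hr.1)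
        have := arcosh_aux h1
        positivity
      · apply ContinuousOn.log cden.continuousOn
        intro r hr
        have h1 : (1:ℝ) ≤ r+1 := by nlinarith [lt_of_lt_of_le hε0 hr.1]
        have := arcosh_aux h1
        positivity
      · intro r hr
        have := hden r (lt_of_lt_of_le hε0 hr.1)
        simp only [_root_.arcosh] at this
        exact this.ne'
    obtain ⟨r₀, hr₀, hmax⟩ := isCompact_Icc.exists_isMaxOn hIcc hfc
    have hr₀pos : 0 < r₀ := lt_of_lt_of_le hε0 hr₀.1
    have hm1 : _root_.arcosh (c₀*r₀+1) / _root_.arcosh (r₀+1) < 1 :=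
      (div_lt_one (hden r₀ hr₀pos)).2 (part1 r₀ hr₀pos)
    refine ⟨max (Real.sqrt c₀ * Real.exp (Real.sqrt (2*ε)/2))
      (_root_.arcosh (c₀*r₀+1) / _root_.arcosh (r₀+1)), max_lt hc₁s1 hm1, fun r hr => ?_⟩
    have hrpos := hr.1
    have hden' := hden r hrpos
    have hdn : (0:ℝ) ≤ _root_.arcosh (r+1) := hden'.le
    rcases le_total r ε with hle | hge
    · have h1 := K1 r hrpos
      have h2 : Real.exp (Real.sqrt (2*r)/2) ≤ Real.exp (Real.sqrt (2*ε)/2) := by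
        apply Real.exp_le_exp.2
        have := Real.sqrt_le_sqrt (show 2*r ≤ 2*ε by linarith)
        linarith
      calc _root_.arcosh (c₀*r+1) ≤ (Real.sqrt c₀ * Real.exp (Real.sqrt (2*r)/2)) * _root_.arcosh (r+1) := h1
        _ ≤ (Real.sqrt c₀ * Real.exp (Real.sqrt (2*ε)/2)) * _root_.arcosh (r+1) := by
            apply mul_le_mul_of_nonneg_right _ hdn
            nlinarith [Real.sqrt_nonneg c₀]
        _ ≤ _ := mul_le_mul_of_nonneg_right (le_max_left _ _) hdn
    · have hmem : r ∈ Set.Icc ε R := ⟨hge, hr.2⟩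
      have h3 : _root_.arcosh (c₀*r+1) / _root_.arcosh (r+1) ≤ _root_.arcosh (c₀*r₀+1) / _root_.arcosh (r₀+1) := hmax hmem
      have h4 := (div_le_iff₀ hden').1 h3
      calc _root_.arcosh (c₀*r+1) ≤ (_root_.arcosh (c₀*r₀+1) / _root_.arcosh (r₀+1)) * _root_.arcosh (r+1) := h4
        _ ≤ _ := mul_le_mul_of_nonneg_right (le_max_right _ _) hdn
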